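/- arXiv:math/0109109 — 2 statements merged into one kernel-verified Lean document; each statement's English description precedes it below -/
import Mathlib

section
/- Let p(x, y) be a real polynomial of degree at most 3 in x and at most 3 in y (a bicubic polynomial). Suppose that at each of the four vertices v ∈ {(0,0), (1,0), (0,1), (1,1)} of the unit square, the value p(v), the first partial derivatives ∂p/∂x(v) and ∂p/∂y(v), and the mixed second derivative ∂²p/∂x∂y(v) all vanish. Then p is the zero polynomial. (Equivalently, these 16 degrees of freedom determine a bicubic polynomial uniquely.) -/
/-- The bicubic polynomial with coefficients `c : Fin 4 → Fin 4 → ℝ`,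
`P(x,y) = ∑_{i,j ≤ 3} c i j · xⁱ yʲ`. -/
noncomputable def bicubic (c : Fin 4 → Fin 4 → ℝ) : ℝ → ℝ → ℝ :=
  fun x y => ∑ i : Fin 4, ∑ j : Fin 4, c i j * x ^ (i : ℕ) * y ^ (j : ℕ)


lemma hasDerivAt_bicubic_x (c : Fin 4 → Fin 4 → ℝ) (b x : ℝ) :
    HasDerivAt (fun x => bicubic c x b)
      (∑ i : Fin 4, ∑ j : Fin 4, c i j * ((i : ℕ) * x ^ ((i : ℕ) - 1)) * b ^ (j : ℕ)) x := by
  unfold bicubic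
  apply HasDerivAt.fun_sum; intro i _
  apply HasDerivAt.fun_sum; intro j _
  exact ((hasDerivAt_pow (i : ℕ) x).const_mul (c i j)).mul_const _

lemma hasDerivAt_bicubic_y (c : Fin 4 → Fin 4 → ℝ) (x y : ℝ) :
    HasDerivAt (fun y => bicubic c x y)
      (∑ i : Fin 4, ∑ j : Fin 4, c i j * x ^ (i : ℕ) * ((j : ℕ) * y ^ ((j : ℕ) - 1))) y := by
  unfold bicubic
  apply HasDerivAt.fun_sum; intro i _
  apply HasDerivAt.fun_sum; intro j _
  exact (hasDerivAt_pow (j : ℕ) y).const_mul (c i j * x ^ (i : ℕ))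

lemma deriv_bicubic_y (c : Fin 4 → Fin 4 → ℝ) (x b : ℝ) :
    deriv (fun y => bicubic c x y) b
      = ∑ i : Fin 4, ∑ j : Fin 4, c i j * x ^ (i : ℕ) * ((j : ℕ) * b ^ ((j : ℕ) - 1)) :=
  (hasDerivAt_bicubic_y c x b).deriv

lemma hasDerivAt_bicubic_xy (c : Fin 4 → Fin 4 → ℝ) (b x : ℝ) :
    HasDerivAt (fun x => deriv (fun y => bicubic c x y) b)
      (∑ i : Fin 4, ∑ j : Fin 4,
        c i j * ((i : ℕ) * x ^ ((i : ℕ) - 1)) * ((j : ℕ) * b ^ ((j : ℕ) - 1))) x := by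
  have : (fun x => deriv (fun y => bicubic c x y) b)
      = fun x => ∑ i : Fin 4, ∑ j : Fin 4, c i j * x ^ (i : ℕ) * ((j : ℕ) * b ^ ((j : ℕ) - 1)) := by
    funext x; exact deriv_bicubic_y c x b
  rw [this]
  apply HasDerivAt.fun_sum; intro i _
  apply HasDerivAt.fun_sum; intro j _
  exact ((hasDerivAt_pow (i : ℕ) x).const_mul (c i j)).mul_const _


/-- Unisolvence of the Bogner–Fox–Schmit degrees of freedom: a bicubic polynomial
whose value, first partial derivatives, and mixed second derivative vanish at the
four vertices of the unit square is the zero polynomial. -/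
theorem bicubic_unisolvence (c : Fin 4 → Fin 4 → ℝ)
    (hval : ∀ a ∈ ({0, 1} : Set ℝ), ∀ b ∈ ({0, 1} : Set ℝ), bicubic c a b = 0)
    (hdx : ∀ a ∈ ({0, 1} : Set ℝ), ∀ b ∈ ({0, 1} : Set ℝ),
      deriv (fun x => bicubic c x b) a = 0)
    (hdy : ∀ a ∈ ({0, 1} : Set ℝ), ∀ b ∈ ({0, 1} : Set ℝ),
      deriv (fun y => bicubic c a y) b = 0)
    (hdxy : ∀ a ∈ ({0, 1} : Set ℝ), ∀ b ∈ ({0, 1} : Set ℝ),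
      deriv (fun x => deriv (fun y => bicubic c x y) b) a = 0) :
    ∀ i j, c i j = 0 := by
  have h0 : (0:ℝ) ∈ ({0,1} : Set ℝ) := by simp
  have h1 : (1:ℝ) ∈ ({0,1} : Set ℝ) := by simp
  have v00 := hval 0 h0 0 h0; have v01 := hval 0 h0 1 h1
  have v10 := hval 1 h1 0 h0; have v11 := hval 1 h1 1 h1
  have x00 := hdx 0 h0 0 h0; have x01 := hdx 0 h0 1 h1
  have x10 := hdx 1 h1 0 h0; have x11 := hdx 1 h1 1 h1
  have y00 := hdy 0 h0 0 h0; have y01 := hdy 0 h0 1 h1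
  have y10 := hdy 1 h1 0 h0; have y11 := hdy 1 h1 1 h1
  have m00 := hdxy 0 h0 0 h0; have m01 := hdxy 0 h0 1 h1
  have m10 := hdxy 1 h1 0 h0; have m11 := hdxy 1 h1 1 h1
  rw [(hasDerivAt_bicubic_x c _ _).deriv] at x00 x01 x10 x11
  rw [(hasDerivAt_bicubic_y c _ _).deriv] at y00 y01 y10 y11
  rw [(hasDerivAt_bicubic_xy c _ _).deriv] at m00 m01 m10 m11
  simp only [bicubic, Fin.sum_univ_four, Fin.isValue, Fin.val_zero, Fin.val_one, Fin.val_two,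
    show ((3:Fin 4):ℕ) = 3 from rfl] at v00 v01 v10 v11 x00 x01 x10 x11 y00 y01 y10 y11 m00 m01 m10 m11
  norm_num at v00 v01 v10 v11 x00 x01 x10 x11 y00 y01 y10 y11 m00 m01 m10 m11
  intro i j
  fin_cases i <;> fin_cases j <;> simp <;> linarith
end

section
/- Let p(x, y) be a real polynomial of degree at most 3 in x and at most 3 in y (a bicubic polynomial). Suppose that at the two points (0,0) and (0,1), the value p, the partial derivatives ∂p/∂x and ∂p/∂y, and the mixed derivative ∂²p/∂x∂y all vanish. Then p(0, y) = 0 and ∂p/∂x(0, y) = 0 for all y ∈ ℝ. (Hence matching these degrees of freedom at shared edge endpoints makes the piecewise bicubic Bogner–Fox–Schmit functions continuously differentiable across element edges.) -/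

lemma fin3 : ((3 : Fin 4) : ℕ) = 3 := rfl

lemma deriv_cubic (A B C D t : ℝ) :
    deriv (fun x : ℝ => A + B*x + C*x^2 + D*x^3) t = B + 2*C*t + 3*D*t^2 := by
  have h : HasDerivAt (fun x : ℝ => A + B*x + C*x^2 + D*x^3)
      (B + 2*C*t + 3*D*t^2) t := by
    have h1 : HasDerivAt (fun x : ℝ => x) 1 t := hasDerivAt_id t
    have h2 := hasDerivAt_pow 2 t
    have h3 := hasDerivAt_pow 3 t
    have := ((hasDerivAt_const (F := ℝ) t A).add (h1.const_mul B)).add (h2.const_mul C) |>.add (h3.const_mul D)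
    refine HasDerivAt.congr_deriv this ?_
    push_cast; norm_num; ring
  exact h.deriv

lemma bicubic_as_x (c : Fin 4 → Fin 4 → ℝ) (b : ℝ) :
    (fun x => bicubic c x b) = fun x =>
      (∑ j : Fin 4, c 0 j * b ^ (j:ℕ)) + (∑ j : Fin 4, c 1 j * b ^ (j:ℕ)) * x
      + (∑ j : Fin 4, c 2 j * b ^ (j:ℕ)) * x^2 + (∑ j : Fin 4, c 3 j * b ^ (j:ℕ)) * x^3 := by
  funext x
  simp [bicubic, Fin.sum_univ_four, fin3]
  ring

lemma bicubic_as_y (c : Fin 4 → Fin 4 → ℝ) (x : ℝ) :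
    (fun y => bicubic c x y) = fun y =>
      (∑ i : Fin 4, c i 0 * x ^ (i:ℕ)) + (∑ i : Fin 4, c i 1 * x ^ (i:ℕ)) * y
      + (∑ i : Fin 4, c i 2 * x ^ (i:ℕ)) * y^2 + (∑ i : Fin 4, c i 3 * x ^ (i:ℕ)) * y^3 := by
  funext y
  simp [bicubic, Fin.sum_univ_four, fin3]
  ring

/-- `C¹` continuity across edges for the Bogner–Fox–Schmit element: if a bicubic
polynomial has vanishing value, first partial derivatives and mixed second
derivative at `(0,0)` and `(0,1)`, then `P(0, y) = 0` and `∂P/∂x (0, y) = 0`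
for all `y`. -/
theorem bicubic_edge_trace_zero (c : Fin 4 → Fin 4 → ℝ)
    (hval : ∀ b ∈ ({0, 1} : Set ℝ), bicubic c 0 b = 0)
    (hdx : ∀ b ∈ ({0, 1} : Set ℝ), deriv (fun x => bicubic c x b) 0 = 0)
    (hdy : ∀ b ∈ ({0, 1} : Set ℝ), deriv (fun y => bicubic c 0 y) b = 0)
    (hdxy : ∀ b ∈ ({0, 1} : Set ℝ),
      deriv (fun x => deriv (fun y => bicubic c x y) b) 0 = 0) :
    ∀ y : ℝ, bicubic c 0 y = 0 ∧ deriv (fun x => bicubic c x y) 0 = 0 := by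
  -- value at (0,b)
  have hV : ∀ b : ℝ, bicubic c 0 b =
      c 0 0 + c 0 1 * b + c 0 2 * b^2 + c 0 3 * b^3 := by
    intro b; simp [bicubic, Fin.sum_univ_four, fin3]
  -- x-derivative at (0,b)
  have hX : ∀ b : ℝ, deriv (fun x => bicubic c x b) 0 =
      c 1 0 + c 1 1 * b + c 1 2 * b^2 + c 1 3 * b^3 := by
    intro b
    rw [bicubic_as_x, deriv_cubic]
    simp [Fin.sum_univ_four, fin3]
  -- y-derivative at (0,b)
  have hY : ∀ b : ℝ, deriv (fun y => bicubic c 0 y) b =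
      c 0 1 + 2 * c 0 2 * b + 3 * c 0 3 * b^2 := by
    intro b
    rw [bicubic_as_y, deriv_cubic]
    simp [Fin.sum_univ_four, fin3]
  -- mixed derivative at (0,b)
  have hXY : ∀ b : ℝ, deriv (fun x => deriv (fun y => bicubic c x y) b) 0 =
      c 1 1 + 2 * c 1 2 * b + 3 * c 1 3 * b^2 := by
    intro b
    have heq : (fun x => deriv (fun y => bicubic c x y) b) = fun x =>
        (∑ i : Fin 4, c i 1 * x ^ (i:ℕ)) + (2 * ∑ i : Fin 4, c i 2 * x ^ (i:ℕ)) * b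
        + (3 * ∑ i : Fin 4, c i 3 * x ^ (i:ℕ)) * b^2 + 0 * x^3 := by
      funext x
      rw [bicubic_as_y, deriv_cubic]
      ring
    rw [heq]
    have heq2 : (fun x : ℝ =>
        (∑ i : Fin 4, c i 1 * x ^ (i:ℕ)) + (2 * ∑ i : Fin 4, c i 2 * x ^ (i:ℕ)) * b
        + (3 * ∑ i : Fin 4, c i 3 * x ^ (i:ℕ)) * b^2 + 0 * x^3)
        = fun x : ℝ =>
        (c 0 1 + 2*c 0 2*b + 3*c 0 3*b^2) + (c 1 1 + 2*c 1 2*b + 3*c 1 3*b^2) * x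
        + (c 2 1 + 2*c 2 2*b + 3*c 2 3*b^2) * x^2 + (c 3 1 + 2*c 3 2*b + 3*c 3 3*b^2) * x^3 := by
      funext x; simp [Fin.sum_univ_four, fin3]; ring
    rw [heq2, deriv_cubic]; ring
  have m0 : (0:ℝ) ∈ ({0,1} : Set ℝ) := by simp
  have m1 : (1:ℝ) ∈ ({0,1} : Set ℝ) := by simp
  have e1 := hval 0 m0; have e2 := hval 1 m1
  have e3 := hdx 0 m0; have e4 := hdx 1 m1
  have e5 := hdy 0 m0; have e6 := hdy 1 m1
  have e7 := hdxy 0 m0; have e8 := hdxy 1 m1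
  rw [hV] at e1 e2; rw [hX] at e3 e4; rw [hY] at e5 e6; rw [hXY] at e7 e8
  norm_num at e1 e2 e3 e4 e5 e6 e7 e8
  have c00 : c 0 0 = 0 := e1
  have c01 : c 0 1 = 0 := e5
  have c02 : c 0 2 = 0 := by linarith
  have c03 : c 0 3 = 0 := by linarith
  have c10 : c 1 0 = 0 := e3
  have c11 : c 1 1 = 0 := e7
  have c12 : c 1 2 = 0 := by linarith
  have c13 : c 1 3 = 0 := by linarith
  intro y
  constructor
  · rw [hV, c00, c01, c02, c03]; ring
  · rw [hX, c10, c11, c12, c13]; ring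
end
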